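/- arXiv:0806.0178 — 4 statements merged into one kernel-verified Lean document; each statement's English description precedes it below -/
import Mathlib

section
/- Let 0<p<1 and let G be a graph on n vertices in which every subset of at least n^{1/4} vertices has edge density at least p/2 (i.e., a set U with |U|=u ≥ n^{1/4} spans at least (p/2)·C(u,2) edges). Then every subset W ⊆ V(G) with |W| > n^{1/3} contains a complete subgraph on at least c·log n vertices, where c = -1/(12·log(p/2)), for all sufficiently large n. -/
open MeasureTheory Filter
open scoped Classical

/-- The number of edges of `G` lying inside the vertex set `U`. -/
noncomputable def edgesIn {n : ℕ} (G : SimpleGraph (Fin n)) (U : Finset (Fin n)) : ℕ :=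
  (Finset.univ.filter fun e : Sym2 (Fin n) => e ∈ G.edgeSet ∧ ∀ v ∈ e, v ∈ U).card

namespace Stmt0Aux

variable {n : ℕ}

/-- The graph `G` restricted to edges inside `U`. -/
def inside (G : SimpleGraph (Fin n)) (U : Finset (Fin n)) : SimpleGraph (Fin n) where
  Adj a b := G.Adj a b ∧ a ∈ U ∧ b ∈ U
  symm := ⟨fun a b h => ⟨h.1.symm, h.2.2, h.2.1⟩⟩
  loopless := ⟨fun a h => G.loopless.irrefl a h.1⟩

lemma inside_adj (G : SimpleGraph (Fin n)) (U : Finset (Fin n)) (a b : Fin n) :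
    (inside G U).Adj a b ↔ G.Adj a b ∧ a ∈ U ∧ b ∈ U := Iff.rfl

lemma handshake (G : SimpleGraph (Fin n)) (U : Finset (Fin n)) :
    ∑ v ∈ U, (U.filter (G.Adj v)).card = 2 * edgesIn G U := by
  classical
  have h1 : (inside G U).edgeFinset.card = edgesIn G U := by
    unfold edgesIn
    congr 1
    ext e
    induction e using Sym2.ind with
    | _ a b =>
      simp only [SimpleGraph.mem_edgeFinset, Finset.mem_filter, Finset.mem_univ, true_and,
        SimpleGraph.mem_edgeSet, Sym2.mem_iff, inside_adj]
      constructor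
      · rintro ⟨h, ha, hb⟩
        exact ⟨h, fun v hv => by rcases hv with rfl | rfl <;> assumption⟩
      · rintro ⟨h, hall⟩
        exact ⟨h, hall a (Or.inl rfl), hall b (Or.inr rfl)⟩
  have h2 : ∑ v, (inside G U).degree v = 2 * (inside G U).edgeFinset.card :=
    SimpleGraph.sum_degrees_eq_twice_card_edges _
  have h3 : ∀ v : Fin n, (inside G U).degree v
      = if v ∈ U then (U.filter (G.Adj v)).card else 0 := by
    intro v
    rw [← SimpleGraph.card_neighborFinset_eq_degree]
    by_cases hv : v ∈ U
    · simp only [hv, if_true]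
      congr 1
      ext a
      simp only [SimpleGraph.mem_neighborFinset, inside_adj, Finset.mem_filter]
      tauto
    · simp only [hv, if_false, Finset.card_eq_zero]
      ext a
      simp only [SimpleGraph.mem_neighborFinset, inside_adj, Finset.notMem_empty, iff_false]
      tauto
  have h4 : ∑ v, (inside G U).degree v = ∑ v ∈ U, (U.filter (G.Adj v)).card := by
    rw [Finset.sum_congr rfl (fun v _ => h3 v)]
    simp [Finset.sum_ite_mem]
  omega

end Stmt0Aux

namespace Stmt0Aux

lemma exists_good_vertex {n : ℕ} {p : ℝ} (hp0 : 0 < p) (G : SimpleGraph (Fin n))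
    (U : Finset (Fin n)) (hUne : U.Nonempty)
    (hdens : (p / 2) * (U.card.choose 2 : ℝ) ≤ (edgesIn G U : ℝ)) :
    ∃ v ∈ U, (p / 2) * ((U.card : ℝ) - 1) ≤ ((U.filter (G.Adj v)).card : ℝ) := by
  classical
  obtain ⟨v, hv, hmax⟩ := Finset.exists_max_image U (fun w => (U.filter (G.Adj w)).card) hUne
  refine ⟨v, hv, ?_⟩
  have hsum : 2 * edgesIn G U ≤ U.card * (U.filter (G.Adj v)).card := by
    rw [← handshake G U]
    calc ∑ w ∈ U, (U.filter (G.Adj w)).card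
        ≤ ∑ _w ∈ U, (U.filter (G.Adj v)).card := Finset.sum_le_sum (fun w hw => hmax w hw)
      _ = U.card * (U.filter (G.Adj v)).card := by rw [Finset.sum_const, smul_eq_mul]
  have hsumR : (2 : ℝ) * (edgesIn G U : ℝ) ≤ (U.card : ℝ) * ((U.filter (G.Adj v)).card : ℝ) := by
    exact_mod_cast hsum
  have hchoose : ((U.card.choose 2 : ℕ) : ℝ) = (U.card : ℝ) * ((U.card : ℝ) - 1) / 2 := by
    rw [Nat.cast_choose_two]
  have hu1 : (1 : ℝ) ≤ (U.card : ℝ) := by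
    exact_mod_cast Nat.one_le_iff_ne_zero.mpr (Finset.card_ne_zero_of_mem hv)
  rw [hchoose] at hdens
  nlinarith [hdens, hsumR, hu1]

lemma key {n : ℕ} {p : ℝ} (hp0 : 0 < p) (hp1 : p < 1) (G : SimpleGraph (Fin n))
    (hn : 1 ≤ n)
    (hbase : (1 : ℝ) ≤ p / 2 * ((n : ℝ) ^ ((1 : ℝ) / 4) + 1))
    (hG : ∀ U : Finset (Fin n), (n : ℝ) ^ ((1 : ℝ) / 4) ≤ U.card →
        (p / 2) * (U.card.choose 2 : ℝ) ≤ (edgesIn G U : ℝ)) :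
    ∀ m : ℕ, ∀ T : Finset (Fin n), T.card ≤ m →
      ∃ S : Finset (Fin n), S ⊆ T ∧ G.IsClique (S : Set (Fin n)) ∧
        (p / 2) ^ S.card * ((T.card : ℝ) + 1) ≤ p / 2 * ((n : ℝ) ^ ((1 : ℝ) / 4) + 1) := by
  classical
  have hq0 : (0 : ℝ) < p / 2 := by linarith
  intro m
  induction m with
  | zero =>
    intro T hT
    rw [Nat.le_zero, Finset.card_eq_zero] at hT
    subst hT
    exact ⟨∅, by simp, by simp, by simpa using hbase⟩
  | succ m ih =>
    intro T hT
    by_cases hTbig : (n : ℝ) ^ ((1 : ℝ) / 4) ≤ (T.card : ℝ)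
    · have hx1 : (1 : ℝ) ≤ (n : ℝ) ^ ((1 : ℝ) / 4) := by
        apply Real.one_le_rpow (by exact_mod_cast hn) (by norm_num)
      have hne : T.Nonempty := by
        rw [← Finset.card_pos]
        by_contra h
        push_neg at h
        interval_cases h' : T.card <;> simp_all <;> linarith
      obtain ⟨v, hv, hdeg⟩ := exists_good_vertex hp0 G T hne (hG T hTbig)
      set T' := T.filter (G.Adj v) with hT'def
      have hvT' : v ∉ T' := by simp [hT'def]
      have hsub : T' ⊆ T := Finset.filter_subset _ _
      have hcard' : T'.card ≤ m := by
        have hlt : T'.card < T.card :=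
          Finset.card_lt_card ⟨hsub, fun h => hvT' (h hv)⟩
        omega
      obtain ⟨S', hS'sub, hS'clique, hS'bound⟩ := ih T' hcard'
      have hvS' : v ∉ S' := fun h => hvT' (hS'sub h)
      refine ⟨insert v S', Finset.insert_subset hv (hS'sub.trans hsub), ?_, ?_⟩
      · rw [Finset.coe_insert]
        refine hS'clique.insert (fun w hw _ => ?_)
        have : w ∈ T' := hS'sub hw
        rw [hT'def, Finset.mem_filter] at this
        exact this.2
      · rw [Finset.card_insert_of_notMem hvS']
        have hstep : (p / 2) * ((T.card : ℝ) + 1) ≤ (T'.card : ℝ) + 1 := by nlinarith [hdeg]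
        calc (p / 2) ^ (S'.card + 1) * ((T.card : ℝ) + 1)
            = (p / 2) ^ S'.card * ((p / 2) * ((T.card : ℝ) + 1)) := by ring
          _ ≤ (p / 2) ^ S'.card * ((T'.card : ℝ) + 1) :=
              mul_le_mul_of_nonneg_left hstep (pow_nonneg hq0.le _)
          _ ≤ _ := hS'bound
    · push_neg at hTbig
      rcases T.eq_empty_or_nonempty with rfl | ⟨v, hv⟩
      · exact ⟨∅, by simp, by simp, by simpa using hbase⟩
      · refine ⟨{v}, by simpa, by simp, ?_⟩
        simp only [Finset.card_singleton, pow_one]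
        have : (T.card : ℝ) + 1 ≤ (n : ℝ) ^ ((1 : ℝ) / 4) + 1 := by linarith
        exact mul_le_mul_of_nonneg_left this hq0.le

end Stmt0Aux

/-- For fixed $0<p<1$ and all sufficiently large $n$: if every vertex
subset of $G$ of size at least $n^{1/4}$ has edge density at least $p/2$, then every
$W$ with $|W| > n^{1/3}$ contains a complete subgraph on at least
$c\log n$ vertices, where $c = -1/(12\log(p/2))$. -/
theorem stmt0 (p : ℝ) (hp0 : 0 < p) (hp1 : p < 1) :
    ∃ N : ℕ, ∀ n ≥ N, ∀ G : SimpleGraph (Fin n),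
      (∀ U : Finset (Fin n), (n : ℝ) ^ ((1 : ℝ) / 4) ≤ U.card →
        (p / 2) * (U.card.choose 2 : ℝ) ≤ (edgesIn G U : ℝ)) →
      ∀ W : Finset (Fin n), (n : ℝ) ^ ((1 : ℝ) / 3) < W.card →
        ∃ S : Finset (Fin n), ↑S ⊆ (W : Set (Fin n)) ∧ G.IsClique (S : Set (Fin n)) ∧
          (-1 / (12 * Real.log (p / 2))) * Real.log n ≤ S.card := by
  classical
  obtain ⟨N₀, hN₀⟩ := exists_nat_ge ((2 / p) ^ 4)
  refine ⟨max N₀ 1, fun n hn G hG W hW => ?_⟩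
  have hn1 : 1 ≤ n := le_trans (le_max_right _ _) hn
  have hn1R : (1 : ℝ) ≤ (n : ℝ) := by exact_mod_cast hn1
  have hnN : ((2 / p) ^ 4 : ℝ) ≤ (n : ℝ) :=
    hN₀.trans (by exact_mod_cast le_trans (le_max_left _ _) hn)
  have h2p : (0 : ℝ) < 2 / p := by positivity
  have hx : (2 / p) ≤ (n : ℝ) ^ ((1 : ℝ) / 4) := by
    calc (2 / p) = ((2 / p) ^ (4 : ℕ) : ℝ) ^ ((1 : ℝ) / 4) := by
          rw [← Real.rpow_natCast (2 / p) 4, ← Real.rpow_mul h2p.le]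
          norm_num
      _ ≤ (n : ℝ) ^ ((1 : ℝ) / 4) :=
          Real.rpow_le_rpow (by positivity) hnN (by norm_num)
  have hbase : (1 : ℝ) ≤ p / 2 * ((n : ℝ) ^ ((1 : ℝ) / 4) + 1) := by
    have h1 : (1 : ℝ) ≤ p / 2 * (2 / p) := by
      rw [div_mul_div_comm]
      rw [le_div_iff₀ (by positivity)]
      ring_nf
      linarith
    calc (1 : ℝ) ≤ p / 2 * (2 / p) := h1
      _ ≤ p / 2 * ((n : ℝ) ^ ((1 : ℝ) / 4) + 1) := by
          apply mul_le_mul_of_nonneg_left (by linarith) (by positivity)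
  obtain ⟨S, hSW, hSclique, hSbound⟩ :=
    Stmt0Aux.key hp0 hp1 G hn1 hbase hG W.card W le_rfl
  refine ⟨S, Finset.coe_subset.mpr hSW, hSclique, ?_⟩
  -- log computation
  set q : ℝ := p / 2 with hq
  set s : ℕ := S.card with hs
  set x : ℝ := (n : ℝ) ^ ((1 : ℝ) / 4) with hxdef
  have hq0 : (0 : ℝ) < q := by rw [hq]; linarith
  have hq1 : q < 1 := by rw [hq]; linarith
  have hx1 : (1 : ℝ) ≤ x := by
    apply Real.one_le_rpow hn1R (by norm_num)
  have hchain : q ^ s * (n : ℝ) ^ ((1 : ℝ) / 3) < p * x := by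
    calc q ^ s * (n : ℝ) ^ ((1 : ℝ) / 3)
        < q ^ s * ((W.card : ℝ) + 1) := by
          apply mul_lt_mul_of_pos_left (by linarith) (pow_pos hq0 s)
      _ ≤ q * (x + 1) := hSbound
      _ ≤ p * x := by nlinarith
  have hlog := Real.log_lt_log (by positivity) hchain
  rw [Real.log_mul (by positivity) (by positivity),
      Real.log_mul (by positivity) (by positivity),
      Real.log_pow, Real.log_rpow (by linarith), hxdef,
      Real.log_rpow (by linarith)] at hlog
  have hlogq : Real.log q < 0 := Real.log_neg hq0 hq1
  have hlogp : Real.log p < 0 := Real.log_neg hp0 hp1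
  have hlogn : 0 ≤ Real.log n := Real.log_nonneg hn1R
  -- hlog : s * log q + (1/3) * log n < log p + (1/4) * log n
  have hmain : (1 / 12) * Real.log n ≤ (s : ℝ) * (-Real.log q) := by nlinarith
  have h12 : (0 : ℝ) < 12 * (-Real.log q) := by linarith
  have hrw : (-1 / (12 * Real.log (p / 2))) * Real.log n
      = Real.log n / (12 * (-Real.log q)) := by
    rw [hq]
    field_simp
  rw [hrw, div_le_iff₀ h12]
  nlinarith
end

section
/- Let G be a graph in which every induced subgraph on at least u vertices has a vertex of degree at least (p/3) times the number of vertices of that subgraph, where 0<p≤1. Then any set W of vertices with |W| ≥ u contains a clique of size at least ⌊log(u/|W|)/log(p/3)⌋ (equivalently, iterating the greedy step 'pick a maximum-degree vertex and restrict to its neighbourhood' from W produces, for each i with (p/3)^i·|W| ≥ u, a clique of size i together with a common neighbourhood of size at least (p/3)^i·|W|). -/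
open scoped Classical

lemma stmt6_aux {V : Type*} [Fintype V] (G : SimpleGraph V) (p : ℝ) (hp0 : 0 < p) (hp1 : p ≤ 1)
    (u : ℕ)
    (h : ∀ s : Finset V, u ≤ s.card →
      ∃ v ∈ s, (p / 3) * (s.card : ℝ) ≤ ((s.filter fun w => G.Adj v w).card : ℝ)) :
    ∀ k : ℕ, ∀ W : Finset V, (u : ℝ) ≤ (p / 3) ^ k * (W.card : ℝ) →
      ∃ S : Finset V, ↑S ⊆ (W : Set V) ∧ G.IsClique (S : Set V) ∧ k ≤ S.card := by
  have hq0 : 0 < p / 3 := by linarith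
  have hq1 : p / 3 ≤ 1 := by linarith
  intro k
  induction k with
  | zero => intro W _; exact ⟨∅, by simp, by simp, by simp⟩
  | succ k ih =>
    intro W hW
    have hpow : (p / 3) ^ (k + 1) ≤ 1 := pow_le_one₀ hq0.le hq1
    have huW : (u : ℝ) ≤ (W.card : ℝ) := by
      calc (u : ℝ) ≤ (p / 3) ^ (k + 1) * W.card := hW
        _ ≤ 1 * W.card := by
            apply mul_le_mul_of_nonneg_right hpow (by positivity)
        _ = W.card := one_mul _
    have huW' : u ≤ W.card := by exact_mod_cast huW
    obtain ⟨v, hvW, hvdeg⟩ := h W huW'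
    set W' := W.filter (fun w => G.Adj v w) with hW'def
    have hsub : (W' : Set V) ⊆ (W : Set V) := by
      intro x hx; simp only [hW'def, Finset.coe_filter, Set.mem_setOf_eq] at hx
      exact hx.1
    have hcard : (u : ℝ) ≤ (p / 3) ^ k * (W'.card : ℝ) := by
      calc (u : ℝ) ≤ (p / 3) ^ (k + 1) * W.card := hW
        _ = (p / 3) ^ k * ((p / 3) * W.card) := by ring
        _ ≤ (p / 3) ^ k * W'.card := by
            apply mul_le_mul_of_nonneg_left hvdeg (by positivity)
    obtain ⟨S, hSsub, hSclique, hScard⟩ := ih W' hcard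
    have hvnot : v ∉ (S : Set V) := by
      intro hv
      have := hSsub hv
      simp only [hW'def, Finset.coe_filter, Set.mem_setOf_eq] at this
      exact G.irrefl this.2
    refine ⟨insert v S, ?_, ?_, ?_⟩
    · rw [Finset.coe_insert]
      exact Set.insert_subset (by exact_mod_cast hvW) (hSsub.trans hsub)
    · rw [Finset.coe_insert]
      apply hSclique.insert
      intro b hb _
      have := hSsub hb
      simp only [hW'def, Finset.coe_filter, Set.mem_setOf_eq] at this
      exact this.2
    · rw [Finset.card_insert_of_notMem (by exact_mod_cast hvnot)]
      omega

/-- If in `G` every induced subgraph on at least `u` vertices has a vertex of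
degree at least `(p/3)` times its number of vertices (`0<p≤1`), then every `W` with `|W| ≥ u`
contains a clique of size at least `⌊log(u/|W|)/log(p/3)⌋`. -/
theorem stmt6 {V : Type*} [Fintype V] (G : SimpleGraph V) (p : ℝ) (hp0 : 0 < p) (hp1 : p ≤ 1)
    (u : ℕ)
    (h : ∀ s : Finset V, u ≤ s.card →
      ∃ v ∈ s, (p / 3) * (s.card : ℝ) ≤ ((s.filter fun w => G.Adj v w).card : ℝ)) :
    ∀ W : Finset V, u ≤ W.card →
      ∃ S : Finset V, ↑S ⊆ (W : Set V) ∧ G.IsClique (S : Set V) ∧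
        ⌊Real.log ((u : ℝ) / (W.card : ℝ)) / Real.log (p / 3)⌋₊ ≤ S.card := by
  intro W hW
  set k := ⌊Real.log ((u : ℝ) / (W.card : ℝ)) / Real.log (p / 3)⌋₊ with hk
  have hq0 : 0 < p / 3 := by linarith
  have hq1 : p / 3 < 1 := by linarith
  have hlogq : Real.log (p / 3) < 0 := Real.log_neg hq0 hq1
  rcases Nat.eq_zero_or_pos u with hu | hu
  · -- u = 0 case: need (u:ℝ) ≤ (p/3)^k * W.card, trivial
    apply stmt6_aux G p hp0 hp1 u h k W
    rw [hu]; push_cast; positivity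
  · have hWpos : 0 < W.card := lt_of_lt_of_le hu hW
    have hratio0 : 0 < (u : ℝ) / (W.card : ℝ) := by positivity
    have hratio1 : (u : ℝ) / (W.card : ℝ) ≤ 1 := by
      rw [div_le_one (by positivity)]; exact_mod_cast hW
    have hlognum : Real.log ((u : ℝ) / (W.card : ℝ)) ≤ 0 :=
      Real.log_nonpos hratio0.le hratio1
    have hfloor : (k : ℝ) ≤ Real.log ((u : ℝ) / (W.card : ℝ)) / Real.log (p / 3) := by
      apply Nat.floor_le
      exact div_nonneg_of_nonpos (by exact hlognum) hlogq.le
    -- k * log q ≥ log ratio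
    have hmul : Real.log ((u : ℝ) / (W.card : ℝ)) ≤ (k : ℝ) * Real.log (p / 3) := by
      have := (le_div_iff_of_neg hlogq).mp hfloor
      linarith
    have hkey : (u : ℝ) / (W.card : ℝ) ≤ (p / 3) ^ k := by
      have := Real.exp_le_exp.mpr hmul
      rwa [Real.exp_log hratio0, ← Real.log_pow, Real.exp_log (by positivity)] at this
    apply stmt6_aux G p hp0 hp1 u h k W
    rw [div_le_iff₀ (by positivity : (0:ℝ) < (W.card : ℝ))] at hkey
    linarith
end

section
/- Let G be a graph on n vertices whose complement has the property that every vertex subset of size greater than n^{1/3} contains an independent set (in G) of size at least c·log n, for some c > 0. If W ⊆ V(G) satisfies χ(G[W]) ≤ h and |V(G)\W| ≤ M, then χ(G) ≤ h + M/(c·log n) + n^{1/3} + 1. -/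
open scoped Classical

lemma stmt11_step {V : Type*} [DecidableEq V] (G : SimpleGraph V) (U S : Finset V) (hS : S ⊆ U)
    (hcl : Gᶜ.IsClique (S : Set V)) {m : ℕ}
    (hcol : (G.induce ↑(U \ S)).Colorable m) : (G.induce (↑U : Set V)).Colorable (m + 1) := by
  obtain ⟨C⟩ := hcol
  have col : (G.induce (↑U : Set V)).Coloring (Option (Fin m)) := by
    refine SimpleGraph.Coloring.mk
      (fun v => if hv : (v : V) ∈ S then none
        else some (C ⟨v, by simp [Finset.mem_sdiff, v.2, hv]⟩)) ?_
    intro a b hab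
    have hadj : G.Adj (a : V) (b : V) := hab
    by_cases ha : (a : V) ∈ S <;> by_cases hb : (b : V) ∈ S <;> simp [ha, hb]
    · exact absurd hadj (hcl ha hb (G.ne_of_adj hadj)).2
    · intro heq
      exact (C.valid (by exact hadj : (G.induce ↑(U \ S)).Adj ⟨a, by simp [Finset.mem_sdiff, a.2, ha]⟩
        ⟨b, by simp [Finset.mem_sdiff, b.2, hb]⟩)) (by exact_mod_cast heq)
  simpa using col.colorable

/-- Suppose every vertex subset of `G` (a graph on `n ≥ 2` vertices) of size
greater than `n^{1/3}` contains an independent set of size at least `c·log n`. If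
`χ(G[W]) ≤ h` and at most `M` vertices lie outside `W`, then
`χ(G) ≤ h + M/(c·log n) + n^{1/3} + 1` (as `χ(G)` is an integer, this is expressed via the
floor of the right-hand side). Independent sets are cliques of the complement. -/
theorem stmt11 (n : ℕ) (hn : 2 ≤ n) (G : SimpleGraph (Fin n)) (c : ℝ) (hc : 0 < c)
    (hind : ∀ W : Finset (Fin n), (n : ℝ) ^ ((1 : ℝ) / 3) < W.card →
      ∃ S : Finset (Fin n), S ⊆ W ∧ Gᶜ.IsClique (S : Set (Fin n)) ∧ c * Real.log n ≤ S.card)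
    (W : Set (Fin n)) (h : ℕ) (M : ℝ)
    (hW : (G.induce W).chromaticNumber ≤ (h : ℕ∞)) (hM : (Wᶜ.ncard : ℝ) ≤ M) :
    G.chromaticNumber ≤
      (⌊(h : ℝ) + M / (c * Real.log n) + (n : ℝ) ^ ((1 : ℝ) / 3) + 1⌋₊ : ℕ∞) := by
  have hlog : 0 < Real.log n := Real.log_pos (by exact_mod_cast hn)
  have hcl : 0 < c * Real.log n := mul_pos hc hlog
  have hpow0 : (0 : ℝ) ≤ (n : ℝ) ^ ((1 : ℝ) / 3) :=
    Real.rpow_nonneg (Nat.cast_nonneg n) _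
  -- key lemma
  have key : ∀ (U : Finset (Fin n)) (k : ℕ),
      (U.card : ℝ) ≤ (n : ℝ) ^ ((1 : ℝ) / 3) + k * (c * Real.log n) →
      (G.induce (↑U : Set (Fin n))).Colorable (⌊(n : ℝ) ^ ((1 : ℝ) / 3)⌋₊ + k) := by
    intro U
    induction U using Finset.strongInduction with
    | _ U ih =>
      intro k hk
      by_cases hsmall : (U.card : ℝ) ≤ (n : ℝ) ^ ((1 : ℝ) / 3)
      · have : U.card ≤ ⌊(n : ℝ) ^ ((1 : ℝ) / 3)⌋₊ := Nat.le_floor hsmall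
        have hc1 := (G.induce (↑U : Set (Fin n))).colorable_of_fintype
        have heq : Fintype.card (↑(↑U : Set (Fin n))) = U.card := by
          simp
        rw [heq] at hc1
        exact hc1.mono (by omega)
      · push_neg at hsmall
        obtain ⟨S, hSU, hScl, hScard⟩ := hind U hsmall
        have hSpos : 0 < S.card := by
          have : (0 : ℝ) < S.card := lt_of_lt_of_le hcl hScard
          exact_mod_cast this
        have hkpos : 1 ≤ k := by
          by_contra hk0
          push_neg at hk0
          interval_cases k
          simp at hk
          linarith
        have hssub : U \ S ⊂ U := by
          apply Finset.sdiff_ssubset hSU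
          exact Finset.card_pos.mp hSpos
        have hcard' : ((U \ S).card : ℝ) ≤
            (n : ℝ) ^ ((1 : ℝ) / 3) + (k - 1 : ℕ) * (c * Real.log n) := by
          have h1 : (U \ S).card = U.card - S.card := Finset.card_sdiff_of_subset hSU
          have h2 : S.card ≤ U.card := Finset.card_le_card hSU
          have h3 : ((U \ S).card : ℝ) = (U.card : ℝ) - S.card := by
            rw [h1]; push_cast [h2]; ring
          have h4 : ((k - 1 : ℕ) : ℝ) = (k : ℝ) - 1 := by
            push_cast [hkpos]; ring
          rw [h3, h4]
          nlinarith
        have := ih (U \ S) hssub (k - 1) hcard'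
        have hcol := stmt11_step G U S hSU hScl this
        have : ⌊(n : ℝ) ^ ((1 : ℝ) / 3)⌋₊ + (k - 1) + 1 = ⌊(n : ℝ) ^ ((1 : ℝ) / 3)⌋₊ + k := by
          omega
        rwa [this] at hcol
  -- apply to Wᶜ
  set k : ℕ := ⌈M / (c * Real.log n)⌉₊ with hkdef
  have hM0 : 0 ≤ M := le_trans (by positivity) hM
  have hU : ((Wᶜ.toFinset).card : ℝ) ≤ (n : ℝ) ^ ((1 : ℝ) / 3) + k * (c * Real.log n) := by
    have h1 : (Wᶜ.toFinset.card : ℝ) = (Wᶜ.ncard : ℝ) := by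
      rw [Set.ncard_eq_toFinset_card']
    have h2 : M / (c * Real.log n) ≤ (k : ℝ) := Nat.le_ceil _
    have h3 : M ≤ (k : ℝ) * (c * Real.log n) := by
      rw [div_le_iff₀ hcl] at h2; linarith
    linarith [h1 ▸ hM]
  have hcolc := key Wᶜ.toFinset k hU
  rw [Set.coe_toFinset] at hcolc
  obtain ⟨C2⟩ := hcolc
  -- coloring of W
  have hWc : (G.induce W).Colorable h := by
    rwa [SimpleGraph.chromaticNumber_le_iff_colorable] at hW
  obtain ⟨C1⟩ := hWc
  -- combine
  have colG : G.Coloring (Fin h ⊕ Fin (⌊(n : ℝ) ^ ((1 : ℝ) / 3)⌋₊ + k)) := by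
    refine SimpleGraph.Coloring.mk
      (fun v => if hv : v ∈ W then Sum.inl (C1 ⟨v, hv⟩) else Sum.inr (C2 ⟨v, hv⟩)) ?_
    intro a b hab
    by_cases ha : a ∈ W <;> by_cases hb : b ∈ W <;> simp [ha, hb]
    · intro heq
      exact (C1.valid (by exact hab : (G.induce W).Adj ⟨a, ha⟩ ⟨b, hb⟩)) heq
    · intro heq
      exact (C2.valid (by exact hab : (G.induce Wᶜ).Adj ⟨a, ha⟩ ⟨b, hb⟩)) heq
  have hGc : G.Colorable (h + (⌊(n : ℝ) ^ ((1 : ℝ) / 3)⌋₊ + k)) := by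
    have := colG.colorable
    simpa using this
  have hnat : h + (⌊(n : ℝ) ^ ((1 : ℝ) / 3)⌋₊ + k) ≤
      ⌊(h : ℝ) + M / (c * Real.log n) + (n : ℝ) ^ ((1 : ℝ) / 3) + 1⌋₊ := by
    apply Nat.le_floor
    have hfl : (⌊(n : ℝ) ^ ((1 : ℝ) / 3)⌋₊ : ℝ) ≤ (n : ℝ) ^ ((1 : ℝ) / 3) :=
      Nat.floor_le hpow0
    have hdiv0 : 0 ≤ M / (c * Real.log n) := div_nonneg hM0 hcl.le
    have hce : (k : ℝ) < M / (c * Real.log n) + 1 := by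
      exact_mod_cast Nat.ceil_lt_add_one hdiv0
    push_cast
    linarith
  rw [SimpleGraph.chromaticNumber_le_iff_colorable]
  exact hGc.mono hnat
end

section
/- Fix 0 < p < 1. For G ∈ G(n,p), with probability tending to 1 as n → ∞, every subset W ⊆ V(G) with |W| > n^{1/3} contains an independent set of size at least c·log n, where c = c(p) = -1/(12·log((1-p)/2)) > 0. -/
open MeasureTheory Filter
open scoped Classical

/-- The graph determined by an edge-indicator function. -/
def graphOf {n : ℕ} (ω : Sym2 (Fin n) → Bool) : SimpleGraph (Fin n) where
  Adj v w := v ≠ w ∧ ω s(v, w) = true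
  symm := by
    constructor
    intro v w h
    exact ⟨h.1.symm, by rw [Sym2.eq_swap]; exact h.2⟩
  loopless := by constructor; intro v h; exact h.1 rfl

/-- The Erdős–Rényi measure `G(n,p)`: each potential edge is present independently with
probability `p` (for `p ≤ 1` the parameter `min (ofReal p) 1` is just `ofReal p`). -/
noncomputable def gnp (n : ℕ) (p : ℝ) : Measure (Sym2 (Fin n) → Bool) :=
  Measure.pi fun _ => (PMF.bernoulli (min (Real.toNNReal p) 1) (min_le_right _ _)).toMeasure

/-! ### Auxiliary machinery -/

open scoped ENNReal

lemma meas_all {n : ℕ} (s : Set (Sym2 (Fin n) → Bool)) : MeasurableSet s :=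
  s.to_countable.measurableSet

instance gnp_prob (n : ℕ) (p : ℝ) : IsProbabilityMeasure (gnp n p) := by
  unfold gnp; infer_instance

lemma gnp_cyl (n : ℕ) (p : ℝ) (hp1 : p ≤ 1) (S : Finset (Sym2 (Fin n))) :
    gnp n p {ω | ∀ e ∈ S, ω e = true} = ENNReal.ofReal p ^ S.card := by
  have hone : ((PMF.bernoulli (min (Real.toNNReal p) 1) (min_le_right _ _)).toMeasure) {true}
      = ENNReal.ofReal p := by
    rw [PMF.toMeasure_apply_singleton _ _ (measurableSet_singleton _)]
    simp [PMF.bernoulli_apply, min_eq_left (Real.toNNReal_le_one.mpr hp1)]; rfl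
  have hset : {ω : Sym2 (Fin n) → Bool | ∀ e ∈ S, ω e = true}
      = Set.pi Set.univ (fun e => if e ∈ S then ({true} : Set Bool) else Set.univ) := by
    ext ω
    simp only [Set.mem_setOf_eq, Set.mem_pi, Set.mem_univ, forall_true_left]
    constructor
    · intro h e; by_cases he : e ∈ S <;> simp [he, h]
    · intro h e he; have := h e; simpa [he] using this
  rw [hset]
  unfold gnp
  rw [Measure.pi_pi]
  have : ∀ e : Sym2 (Fin n),
      ((PMF.bernoulli (min (Real.toNNReal p) 1) (min_le_right _ _)).toMeasure)
        (if e ∈ S then ({true} : Set Bool) else Set.univ)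
      = if e ∈ S then ENNReal.ofReal p else 1 := by
    intro e; by_cases he : e ∈ S <;> simp only [he, ↓reduceIte, hone, measure_univ]
  rw [Finset.prod_congr rfl (fun e _ => this e)]
  rw [Finset.prod_ite_mem, Finset.univ_inter, Finset.prod_const]

/-- The potential edges (unordered pairs of distinct vertices) inside `U`. -/
noncomputable def pairsIn {n : ℕ} (U : Finset (Fin n)) : Finset (Sym2 (Fin n)) :=
  Finset.univ.filter fun e => ¬ e.IsDiag ∧ ∀ v ∈ e, v ∈ U

lemma edgesIn_graphOf (n : ℕ) (ω : Sym2 (Fin n) → Bool) (U : Finset (Fin n)) :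
    edgesIn (graphOf ω) U = ((pairsIn U).filter fun e => ω e = true).card := by
  unfold edgesIn pairsIn
  rw [Finset.filter_filter]
  congr 1
  ext e
  induction e with
  | _ a b =>
    simp only [Finset.mem_filter, Finset.mem_univ, true_and, SimpleGraph.mem_edgeSet,
      Sym2.isDiag_iff_proj_eq]
    show ((a ≠ b ∧ ω s(a,b) = true) ∧ _) ↔ _
    tauto

lemma double_count {n : ℕ} (G : SimpleGraph (Fin n)) (U : Finset (Fin n)) :
    ((U ×ˢ U).filter fun x => G.Adj x.1 x.2).card = 2 * edgesIn G U := by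
  classical
  rw [Finset.card_eq_sum_card_fiberwise
    (f := fun x : Fin n × Fin n => Sym2.mk x.1 x.2)
    (t := Finset.univ.filter fun e : Sym2 (Fin n) => e ∈ G.edgeSet ∧ ∀ v ∈ e, v ∈ U)]
  · have h2 : ∀ e ∈ (Finset.univ.filter fun e : Sym2 (Fin n) => e ∈ G.edgeSet ∧ ∀ v ∈ e, v ∈ U),
        (((U ×ˢ U).filter fun x => G.Adj x.1 x.2).filter fun x => Sym2.mk x.1 x.2 = e).card = 2 := by
      intro e he
      induction e with
      | _ a b =>
        simp only [Finset.mem_filter, Finset.mem_univ, true_and, SimpleGraph.mem_edgeSet] at he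
        obtain ⟨hadj, hmem⟩ := he
        have hne : a ≠ b := G.ne_of_adj hadj
        have ha : a ∈ U := hmem a (by simp)
        have hb : b ∈ U := hmem b (by simp)
        have hset : (((U ×ˢ U).filter fun x => G.Adj x.1 x.2).filter fun x => Sym2.mk x.1 x.2 = s(a,b))
            = {(a,b), (b,a)} := by
          ext ⟨x, y⟩
          constructor
          · intro hx
            rw [Finset.mem_filter] at hx
            obtain ⟨-, heq⟩ := hx
            rcases Sym2.eq_iff.mp heq with ⟨h1, h2⟩ | ⟨h1, h2⟩
            · subst h1; subst h2; simp
            · subst h1; subst h2; simp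
          · intro hx
            rcases Finset.mem_insert.mp hx with h | h
            · rw [h]
              refine Finset.mem_filter.mpr ⟨Finset.mem_filter.mpr ⟨?_, hadj⟩, rfl⟩
              exact Finset.mem_product.mpr ⟨ha, hb⟩
            · rw [Finset.mem_singleton] at h
              rw [h]
              refine Finset.mem_filter.mpr ⟨Finset.mem_filter.mpr ⟨?_, G.adj_symm hadj⟩, ?_⟩
              · exact Finset.mem_product.mpr ⟨hb, ha⟩
              · exact Sym2.eq_iff.mpr (Or.inr ⟨rfl, rfl⟩)
        rw [hset, Finset.card_insert_of_notMem (by simp [hne]), Finset.card_singleton]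
    rw [Finset.sum_congr rfl h2, Finset.sum_const, smul_eq_mul]
    unfold edgesIn
    ring
  · intro x hx
    simp only [Finset.mem_coe, Finset.mem_filter, Finset.mem_product] at hx
    obtain ⟨⟨hx1, hx2⟩, hadj⟩ := hx
    simp only [Finset.mem_coe, Finset.mem_filter, Finset.mem_univ, true_and, SimpleGraph.mem_edgeSet]
    refine ⟨hadj, ?_⟩
    intro v hv
    rcases Sym2.mem_iff.mp hv with h | h
    · subst h; exact hx1
    · subst h; exact hx2

lemma handshake {n : ℕ} (G : SimpleGraph (Fin n)) (U : Finset (Fin n)) :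
    ∑ v ∈ U, (U.filter (G.Adj v)).card = 2 * edgesIn G U := by
  classical
  rw [← double_count]
  rw [Finset.card_filter]
  rw [Finset.sum_product]
  apply Finset.sum_congr rfl
  intro v _
  rw [Finset.card_filter]

lemma two_mul_pairsIn_card {n : ℕ} (U : Finset (Fin n)) :
    2 * (pairsIn U).card = U.card * U.card - U.card := by
  classical
  have h1 : (pairsIn U).card = edgesIn (⊤ : SimpleGraph (Fin n)) U := by
    unfold pairsIn edgesIn
    congr 1
    ext e
    induction e with
    | _ a b =>
      simp only [Finset.mem_filter, Finset.mem_univ, true_and, SimpleGraph.mem_edgeSet,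
        Sym2.isDiag_iff_proj_eq, SimpleGraph.top_adj]
  rw [h1, ← double_count, ← Finset.offDiag_card]
  congr 1
  ext ⟨x, y⟩
  simp only [Finset.mem_filter, Finset.mem_product, Finset.mem_offDiag, SimpleGraph.top_adj]
  tauto

lemma count_ge {n : ℕ} (A : Finset (Sym2 (Fin n))) (j T : ℕ) (ω : Sym2 (Fin n) → Bool)
    (h : T ≤ (A.filter fun e => ω e = true).card) :
    T.choose j ≤ ((A.powersetCard j).filter fun S => ∀ e ∈ S, ω e = true).card := by
  set X := A.filter fun e => ω e = true with hX
  calc T.choose j ≤ X.card.choose j := Nat.choose_le_choose j h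
  _ = (X.powersetCard j).card := (Finset.card_powersetCard j X).symm
  _ ≤ _ := by
    apply Finset.card_le_card
    intro S hS
    rw [Finset.mem_powersetCard] at hS
    refine Finset.mem_filter.mpr ⟨Finset.mem_powersetCard.mpr
      ⟨hS.1.trans (Finset.filter_subset _ _), hS.2⟩, ?_⟩
    intro e he
    exact (Finset.mem_filter.mp (hS.1 he)).2

lemma first_moment (n : ℕ) (p : ℝ) (hp1 : p ≤ 1)
    (A : Finset (Sym2 (Fin n))) (j T : ℕ)
    (Bad : Set (Sym2 (Fin n) → Bool))
    (hBad : ∀ ω ∈ Bad, T ≤ (A.filter fun e => ω e = true).card) :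
    (T.choose j : ℝ≥0∞) * gnp n p Bad
      ≤ (A.card.choose j : ℝ≥0∞) * ENNReal.ofReal p ^ j := by
  have key : (T.choose j : ℝ≥0∞) * gnp n p Bad
      ≤ ∑ S ∈ A.powersetCard j, gnp n p {ω | ∀ e ∈ S, ω e = true} := by
    have h1 : (T.choose j : ℝ≥0∞) * gnp n p Bad
        = ∫⁻ ω, Bad.indicator (fun _ => (T.choose j : ℝ≥0∞)) ω ∂(gnp n p) := by
      rw [MeasureTheory.lintegral_indicator_const (meas_all _)]
    have h2 : ∀ S : Finset (Sym2 (Fin n)),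
        gnp n p {ω | ∀ e ∈ S, ω e = true}
        = ∫⁻ ω, ({ω | ∀ e ∈ S, ω e = true} : Set _).indicator (fun _ => (1:ℝ≥0∞)) ω
            ∂(gnp n p) := by
      intro S
      rw [MeasureTheory.lintegral_indicator_const (meas_all _), one_mul]
    rw [h1]
    rw [Finset.sum_congr rfl (fun S _ => h2 S), ← MeasureTheory.lintegral_finset_sum]
    · refine MeasureTheory.lintegral_mono fun ω => ?_
      show Bad.indicator _ ω ≤ ∑ S ∈ A.powersetCard j,
          ({ω | ∀ e ∈ S, ω e = true} : Set _).indicator (fun _ => (1:ℝ≥0∞)) ω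
      by_cases hω : ω ∈ Bad
      · rw [Set.indicator_of_mem hω]
        have key2 : ∑ S ∈ A.powersetCard j,
            ({ω | ∀ e ∈ S, ω e = true} : Set _).indicator (fun _ => (1:ℝ≥0∞)) ω
            = (((A.powersetCard j).filter fun S => ∀ e ∈ S, ω e = true).card : ℝ≥0∞) := by
          rw [Finset.card_filter, Nat.cast_sum]
          apply Finset.sum_congr rfl
          intro S _
          simp only [Set.indicator_apply, Set.mem_setOf_eq]
          split_ifs with h <;> simp
        rw [key2]
        exact Nat.cast_le.mpr (count_ge A j T ω (hBad ω hω))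
      · rw [Set.indicator_of_notMem hω]
        exact zero_le
    · intro S _
      exact Measurable.indicator measurable_const (meas_all _)
  calc (T.choose j : ℝ≥0∞) * gnp n p Bad
      ≤ ∑ S ∈ A.powersetCard j, gnp n p {ω | ∀ e ∈ S, ω e = true} := key
  _ = ∑ S ∈ A.powersetCard j, ENNReal.ofReal p ^ j := by
      apply Finset.sum_congr rfl
      intro S hS
      rw [gnp_cyl n p hp1, (Finset.mem_powersetCard.mp hS).2]
  _ = (A.card.choose j : ℝ≥0∞) * ENNReal.ofReal p ^ j := by
      rw [Finset.sum_const, Finset.card_powersetCard, nsmul_eq_mul]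

lemma choose_ratio_bound (p : ℝ) (hp0 : 0 < p) (hp1 : p < 1) (M : ℕ) :
    (M.choose (⌊(1-p)/4 * (M:ℝ)⌋₊) : ℝ) * p ^ (⌊(1-p)/4 * (M:ℝ)⌋₊)
      ≤ ((⌊(1+p)/2 * (M:ℝ)⌋₊ + 1).choose (⌊(1-p)/4 * (M:ℝ)⌋₊) : ℝ)
        * (p/(p+(1-p)/4)) ^ (⌊(1-p)/4 * (M:ℝ)⌋₊) := by
  set j := ⌊(1-p)/4 * (M:ℝ)⌋₊ with hj
  set T := ⌊(1+p)/2 * (M:ℝ)⌋₊ + 1 with hT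
  have hq4 : (0:ℝ) < p + (1-p)/4 := by linarith
  have hρ0 : (0:ℝ) ≤ p/(p+(1-p)/4) := by positivity
  have hjM : (j:ℝ) ≤ (1-p)/4 * M := Nat.floor_le (mul_nonneg (by linarith) (Nat.cast_nonneg M))
  have hTM : (1+p)/2 * (M:ℝ) < T := by
    rw [hT]; push_cast; exact Nat.lt_floor_add_one _
  have hjT1 : j ≤ T := by
    rw [hT]
    exact le_trans (Nat.floor_mono (by nlinarith [Nat.cast_nonneg (α := ℝ) M])) (Nat.le_succ _)
  have hdfM : (M.descFactorial j : ℝ) ≤ (M:ℝ) ^ j := by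
    exact_mod_cast Nat.cast_le.mpr (Nat.descFactorial_le_pow M j)
  have hdfT : ((T + 1 - j : ℕ) : ℝ) ^ j ≤ (T.descFactorial j : ℝ) := by
    exact_mod_cast Nat.cast_le.mpr (Nat.pow_sub_le_descFactorial T j)
  have hcast : ((T + 1 - j : ℕ) : ℝ) = (T:ℝ) + 1 - j := by
    have : j ≤ T + 1 := hjT1.trans (Nat.le_succ _)
    push_cast [Nat.cast_sub this]; ring
  have hkey : (M:ℝ) * p ≤ ((T:ℝ) + 1 - j) * (p/(p+(1-p)/4)) := by
    have h1 : (p + (1-p)/4) * (M:ℝ) ≤ (T:ℝ) + 1 - j := by nlinarith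
    have hcancel : (p + (1-p)/4) * (p/(p+(1-p)/4)) = p := by
      rw [mul_div_assoc', mul_div_cancel_left₀ _ (ne_of_gt hq4)]
    calc (M:ℝ) * p = ((p + (1-p)/4) * M) * (p/(p+(1-p)/4)) := by
          rw [mul_comm (p + (1-p)/4) (M:ℝ), mul_assoc, hcancel]
    _ ≤ ((T:ℝ) + 1 - j) * (p/(p+(1-p)/4)) := by
          apply mul_le_mul_of_nonneg_right h1 hρ0
  have hpow : ((M:ℝ) * p) ^ j ≤ (((T:ℝ) + 1 - j) * (p/(p+(1-p)/4))) ^ j :=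
    pow_le_pow_left₀ (by positivity) hkey j
  have hfac : (0:ℝ) < (j.factorial : ℝ) := by exact_mod_cast j.factorial_pos
  have hM : (M.descFactorial j : ℝ) = (j.factorial : ℝ) * M.choose j := by
    exact_mod_cast congrArg (Nat.cast (R := ℝ)) (Nat.descFactorial_eq_factorial_mul_choose M j)
  have hTd : (T.descFactorial j : ℝ) = (j.factorial : ℝ) * T.choose j := by
    exact_mod_cast congrArg (Nat.cast (R := ℝ)) (Nat.descFactorial_eq_factorial_mul_choose T j)
  rw [← mul_le_mul_iff_right₀ hfac, ← mul_assoc, ← hM, ← mul_assoc, ← hTd]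
  calc (M.descFactorial j : ℝ) * p ^ j ≤ (M:ℝ)^j * p^j := by
        apply mul_le_mul_of_nonneg_right hdfM (by positivity)
  _ = ((M:ℝ) * p) ^ j := by rw [mul_pow]
  _ ≤ (((T:ℝ) + 1 - j) * (p/(p+(1-p)/4))) ^ j := hpow
  _ = ((T:ℝ)+1-j)^j * (p/(p+(1-p)/4))^j := by rw [mul_pow]
  _ ≤ (T.descFactorial j : ℝ) * (p/(p+(1-p)/4))^j := by
        apply mul_le_mul_of_nonneg_right _ (by positivity)
        rw [← hcast]; exact hdfT

lemma badU_bound (n : ℕ) (p : ℝ) (hp0 : 0 < p) (hp1 : p < 1) (U : Finset (Fin n)) :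
    gnp n p {ω | (1+p)/2 * ((pairsIn U).card : ℝ) < (edgesIn (graphOf ω) U : ℝ)}
      ≤ ENNReal.ofReal ((p/(p+(1-p)/4)) ^ ⌊(1-p)/4 * ((pairsIn U).card : ℝ)⌋₊) := by
  set M := (pairsIn U).card with hM
  set j := ⌊(1-p)/4 * (M:ℝ)⌋₊ with hj
  set T := ⌊(1+p)/2 * (M:ℝ)⌋₊ + 1 with hT
  have hθM : (0:ℝ) ≤ (1+p)/2 * (M:ℝ) := by
    apply mul_nonneg (by linarith) (Nat.cast_nonneg M)
  have hBad : ∀ ω ∈ {ω | (1+p)/2 * ((pairsIn U).card : ℝ) < (edgesIn (graphOf ω) U : ℝ)},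
      T ≤ ((pairsIn U).filter fun e => ω e = true).card := by
    intro ω hω
    rw [← edgesIn_graphOf]
    exact Nat.succ_le_of_lt ((Nat.floor_lt hθM).mpr hω)
  have h1 := first_moment n p hp1.le (pairsIn U) j T _ hBad
  have hjT : j ≤ T := by
    rw [hT]
    refine le_trans (Nat.floor_mono ?_) (Nat.le_succ _)
    apply mul_le_mul_of_nonneg_right (by linarith) (Nat.cast_nonneg M)
  have hC0 : (T.choose j : ℝ≥0∞) ≠ 0 := by
    exact_mod_cast (Nat.choose_pos hjT).ne'
  have hCtop : (T.choose j : ℝ≥0∞) ≠ ⊤ := ENNReal.natCast_ne_top _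
  have h2 : (M.choose j : ℝ≥0∞) * ENNReal.ofReal p ^ j
      ≤ (T.choose j : ℝ≥0∞) * ENNReal.ofReal ((p/(p+(1-p)/4)) ^ j) := by
    rw [← ENNReal.ofReal_pow hp0.le, ← ENNReal.ofReal_natCast (M.choose j),
      ← ENNReal.ofReal_natCast (T.choose j),
      ← ENNReal.ofReal_mul (Nat.cast_nonneg _), ← ENNReal.ofReal_mul (Nat.cast_nonneg _)]
    exact ENNReal.ofReal_le_ofReal (choose_ratio_bound p hp0 hp1 M)
  exact (ENNReal.mul_le_mul_iff_right hC0 hCtop).mp (le_trans h1 h2)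

lemma sum_card_bound (n : ℕ) (hn : 1 ≤ n) :
    ∑ U : Finset (Fin n), ((1:ℝ)/n) ^ (2*U.card+1) ≤ 2/n := by
  have hn0 : (0:ℝ) < n := by exact_mod_cast hn
  rw [← Finset.powerset_univ, Finset.sum_powerset, Finset.card_univ, Fintype.card_fin]
  have hgrp : ∀ u ∈ Finset.range (n+1),
      ∑ U ∈ Finset.powersetCard u (Finset.univ : Finset (Fin n)), ((1:ℝ)/n)^(2*U.card+1)
      = (n.choose u : ℝ) * (1/n)^(2*u+1) := by
    intro u _
    rw [Finset.sum_congr rfl (fun U hU => by rw [(Finset.mem_powersetCard.mp hU).2]),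
      Finset.sum_const, Finset.card_powersetCard, Finset.card_univ, Fintype.card_fin,
      nsmul_eq_mul]
  rw [Finset.sum_congr rfl hgrp]
  have hterm : ∀ u : ℕ, 1 ≤ u → (n.choose u : ℝ) * (1/n)^(2*u+1) ≤ 1/(n:ℝ)^2 := by
    intro u hu
    have h1 : (n.choose u : ℝ) ≤ (n:ℝ)^u := by exact_mod_cast Nat.choose_le_pow n u
    have h2 : ((1:ℝ)/n)^(2*u+1) = 1/(n:ℝ)^(2*u+1) := by rw [div_pow, one_pow]
    have h3 : (n:ℝ)^(2*u+1) = (n:ℝ)^u * (n:ℝ)^(u+1) := by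
      rw [← pow_add]; congr 1; omega
    have h4 : (n:ℝ)^2 ≤ (n:ℝ)^(u+1) := by
      apply pow_le_pow_right₀ (by exact_mod_cast hn) (by omega)
    calc (n.choose u : ℝ) * (1/n)^(2*u+1) ≤ (n:ℝ)^u * (1/n)^(2*u+1) := by
          apply mul_le_mul_of_nonneg_right h1 (by positivity)
    _ = 1/(n:ℝ)^(u+1) := by rw [h2, h3]; field_simp
    _ ≤ 1/(n:ℝ)^2 := by
          apply one_div_le_one_div_of_le (by positivity) h4
  rw [Finset.sum_range_succ']
  have hzero : (n.choose 0 : ℝ) * (1/n)^(2*0+1) = 1/n := by simp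
  have hrest : ∑ i ∈ Finset.range n, (n.choose (i+1) : ℝ) * (1/n)^(2*(i+1)+1)
      ≤ ∑ _i ∈ Finset.range n, 1/(n:ℝ)^2 :=
    Finset.sum_le_sum fun i _ => hterm (i+1) (by omega)
  have hconst : ∑ _i ∈ Finset.range n, 1/(n:ℝ)^2 = n * (1/(n:ℝ)^2) := by
    rw [Finset.sum_const, Finset.card_range, nsmul_eq_mul]
  rw [hconst] at hrest
  have hsimp : (n:ℝ) * (1/(n:ℝ)^2) = 1/n := by field_simp
  rw [hsimp] at hrest
  rw [hzero]
  have h2n : (2:ℝ)/n = 1/n + 1/n := by ring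
  linarith

lemma exponent_bound (n : ℕ) (p : ℝ) (hp0 : 0 < p) (hp1 : p < 1)
    (hn3 : 3 ≤ n)
    (hβn : Real.log ((p+(1-p)/4)/p) ≤ 3 * Real.log n)
    (U : Finset (Fin n))
    (hU : ⌊(48/((1-p) * Real.log ((p+(1-p)/4)/p))) * Real.log n⌋₊ + 3 ≤ U.card) :
    (p/(p+(1-p)/4)) ^ ⌊(1-p)/4 * ((pairsIn U).card : ℝ)⌋₊ ≤ ((1:ℝ)/n)^(2*U.card+1) := by
  set β := Real.log ((p+(1-p)/4)/p) with hβdef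
  set u := U.card with hu
  set M := (pairsIn U).card with hMdef
  set j := ⌊(1-p)/4 * (M:ℝ)⌋₊ with hjdef
  have hq0 : (0:ℝ) < 1 - p := by linarith
  have hs0 : (0:ℝ) < p + (1-p)/4 := by linarith
  have hβ0 : (0:ℝ) < β := by
    apply Real.log_pos
    rw [lt_div_iff₀ hp0]; linarith
  have hn0 : (0:ℝ) < n := by positivity
  have hlogn : (1:ℝ) ≤ Real.log n := by
    have h3 : Real.log 3 ≤ Real.log n := by
      apply Real.log_le_log (by norm_num) (by exact_mod_cast hn3)
    have he : (1:ℝ) = Real.log (Real.exp 1) := by rw [Real.log_exp]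
    rw [he]
    refine le_trans (Real.log_le_log (Real.exp_pos 1) ?_) h3
    have := Real.exp_one_lt_d9
    linarith
  have hMcast : 2 * (M:ℝ) = (u:ℝ) * u - u := by
    have h := two_mul_pairsIn_card U
    have hle : u ≤ u * u := Nat.le_mul_of_pos_left u (by omega)
    have hcst := congrArg (Nat.cast (R := ℝ)) h
    rw [Nat.cast_sub hle] at hcst
    push_cast at hcst
    rw [← hMdef] at hcst
    exact_mod_cast hcst
  have hj_lb : (1-p)/4 * (M:ℝ) - 1 < (j:ℝ) := Nat.sub_one_lt_floor _
  have hKu : 48/((1-p)*β) * Real.log n + 2 ≤ (u:ℝ) := by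
    have h1 : (48/((1-p)*β) * Real.log n : ℝ) - 1 < ⌊48/((1-p)*β) * Real.log n⌋₊ :=
      Nat.sub_one_lt_floor _
    have h2 : (⌊48/((1-p)*β) * Real.log n⌋₊ : ℝ) + 3 ≤ (u:ℝ) := by exact_mod_cast hU
    linarith
  have hu3 : (3:ℝ) ≤ (u:ℝ) := by
    have h3 : 3 ≤ u := by omega
    exact_mod_cast h3
  have hkey : (2*(u:ℝ)+1) * Real.log n ≤ (j:ℝ) * β := by
    have hKβ : 48/((1-p)*β) * ((1-p)*β/8) = 6 := by
      field_simp
      norm_num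
    have hMu : (M:ℝ) ≥ (u:ℝ) * (48/((1-p)*β) * Real.log n + 1) / 2 := by
      have huu : (u:ℝ)*u - u = u * ((u:ℝ) - 1) := by ring
      have h5 : (u:ℝ) - 1 ≥ 48/((1-p)*β) * Real.log n + 1 := by linarith
      have h6 : (u:ℝ) * ((u:ℝ)-1) ≥ (u:ℝ) * (48/((1-p)*β) * Real.log n + 1) := by
        apply mul_le_mul_of_nonneg_left h5 (by positivity)
      nlinarith [hMcast]
    have hjβ : (j:ℝ) * β ≥ ((1-p)/4 * (M:ℝ) - 1) * β := by
      apply mul_le_mul_of_nonneg_right (le_of_lt hj_lb) hβ0.le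
    have hMβ : (1-p)/4 * (M:ℝ) * β ≥ (u:ℝ) * (6 * Real.log n) + (1-p)*β/8 * u := by
      have hstep := mul_le_mul_of_nonneg_right hMu (by positivity : (0:ℝ) ≤ (1-p)/4 * β)
      have hexp : (u:ℝ) * (48/((1-p)*β) * Real.log n + 1) / 2 * ((1-p)/4 * β)
          = (u:ℝ) * (6 * Real.log n) + (1-p)*β/8 * u := by
        field_simp
        ring
      rw [hexp] at hstep
      linarith
    have hfinal : (u:ℝ) * (6 * Real.log n) + (1-p)*β/8 * u - β ≥ (2*(u:ℝ)+1) * Real.log n := by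
      have h7 : (4*(u:ℝ)-1) * Real.log n ≥ 3 * Real.log n := by
        apply mul_le_mul_of_nonneg_right _ (by linarith)
        linarith
      nlinarith [mul_nonneg (mul_nonneg hq0.le hβ0.le) (by positivity : (0:ℝ) ≤ (u:ℝ))]
    linarith
  have hρ : p/(p+(1-p)/4) = Real.exp (-β) := by
    rw [hβdef, Real.exp_neg, Real.exp_log (by positivity), inv_div]
  have h1n : (1:ℝ)/n = Real.exp (-Real.log n) := by
    rw [Real.exp_neg, Real.exp_log hn0, one_div]
  rw [hρ, h1n, ← Real.exp_nat_mul, ← Real.exp_nat_mul]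
  apply Real.exp_le_exp.mpr
  have hc1 : (j:ℝ) * (-β) = -((j:ℝ)*β) := by ring
  have hc2 : ((2*u+1 : ℕ):ℝ) * (-Real.log n) = -((2*(u:ℝ)+1) * Real.log n) := by
    push_cast; ring
  rw [hc1, hc2]
  linarith

lemma union_bound (n : ℕ) (p : ℝ) (hp0 : 0 < p) (hp1 : p < 1) (hn3 : 3 ≤ n)
    (hβn : Real.log ((p+(1-p)/4)/p) ≤ 3 * Real.log n) :
    gnp n p {ω | ∃ U : Finset (Fin n),
        ⌊(48/((1-p) * Real.log ((p+(1-p)/4)/p))) * Real.log n⌋₊ + 3 ≤ U.card ∧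
        (1+p)/2 * ((pairsIn U).card : ℝ) < (edgesIn (graphOf ω) U : ℝ)}
      ≤ ENNReal.ofReal (2/n) := by
  set m0 := ⌊(48/((1-p) * Real.log ((p+(1-p)/4)/p))) * Real.log n⌋₊ + 3 with hm0
  set F := Finset.univ.filter (fun U : Finset (Fin n) => m0 ≤ U.card) with hF
  have hset : {ω : Sym2 (Fin n) → Bool | ∃ U : Finset (Fin n), m0 ≤ U.card ∧
        (1+p)/2 * ((pairsIn U).card : ℝ) < (edgesIn (graphOf ω) U : ℝ)}
      = ⋃ U ∈ F, {ω | (1+p)/2 * ((pairsIn U).card : ℝ) < (edgesIn (graphOf ω) U : ℝ)} := by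
    ext ω
    simp only [Set.mem_setOf_eq, Set.mem_iUnion, hF, Finset.mem_filter, Finset.mem_univ,
      true_and, exists_prop]
  rw [hset]
  calc gnp n p _ ≤ ∑ U ∈ F,
      gnp n p {ω | (1+p)/2 * ((pairsIn U).card : ℝ) < (edgesIn (graphOf ω) U : ℝ)} :=
        measure_biUnion_finset_le F _
  _ ≤ ∑ U ∈ F, ENNReal.ofReal (((1:ℝ)/n)^(2*U.card+1)) := by
      apply Finset.sum_le_sum
      intro U hU
      have hUcard : m0 ≤ U.card := (Finset.mem_filter.mp hU).2
      refine le_trans (badU_bound n p hp0 hp1 U) (ENNReal.ofReal_le_ofReal ?_)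
      exact exponent_bound n p hp0 hp1 hn3 hβn U hUcard
  _ = ENNReal.ofReal (∑ U ∈ F, ((1:ℝ)/n)^(2*U.card+1)) := by
      rw [ENNReal.ofReal_sum_of_nonneg (fun U _ => by positivity)]
  _ ≤ ENNReal.ofReal (2/n) := by
      apply ENNReal.ofReal_le_ofReal
      refine le_trans ?_ (sum_card_bound n (by omega))
      exact Finset.sum_le_univ_sum_of_nonneg (fun U => by positivity)

lemma greedy {n : ℕ} (p : ℝ) (hp0 : 0 < p) (hp1 : p < 1) (G : SimpleGraph (Fin n)) (m0 : ℕ)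
    (hm0 : 1 ≤ m0)
    (H : ∀ U : Finset (Fin n), m0 ≤ U.card →
      (edgesIn G U : ℝ) ≤ (1+p)/2 * ((pairsIn U).card : ℝ)) :
    ∀ k : ℕ, ∀ W : Finset (Fin n),
      ((2/(1-p))^k * ((m0:ℝ)+2) - 2 ≤ (W.card:ℝ)) →
      ∃ S : Finset (Fin n), S ⊆ W ∧ S.card = k ∧
        ∀ a ∈ S, ∀ b ∈ S, a ≠ b → ¬ G.Adj a b := by
  intro k
  induction k with
  | zero =>
    intro W _
    exact ⟨∅, Finset.empty_subset _, Finset.card_empty, by simp⟩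
  | succ k ih =>
    intro W hW
    have hq0 : (0:ℝ) < 1 - p := by linarith
    have h2q : (2:ℝ) ≤ 2/(1-p) := by
      rw [le_div_iff₀ hq0]; nlinarith
    have hpow2 : (2:ℝ) ≤ (2/(1-p))^(k+1) := by
      calc (2:ℝ) = 2^1 := (pow_one 2).symm
      _ ≤ 2^(k+1) := pow_le_pow_right₀ one_le_two (by omega)
      _ ≤ (2/(1-p))^(k+1) := pow_le_pow_left₀ (by norm_num) h2q (k+1)
    have hpowpos : (0:ℝ) < (2/(1-p))^k := by positivity
    have hm0W : m0 ≤ W.card := by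
      have h1 : (2:ℝ) * ((m0:ℝ)+2) ≤ (2/(1-p))^(k+1) * ((m0:ℝ)+2) := by
        apply mul_le_mul_of_nonneg_right hpow2 (by positivity)
      have h2 : (m0:ℝ) ≤ (W.card:ℝ) := by nlinarith
      exact_mod_cast h2
    have hWpos : 1 ≤ W.card := le_trans hm0 hm0W
    have hMcast : 2 * ((pairsIn W).card : ℝ) = (W.card:ℝ) * W.card - W.card := by
      have h := two_mul_pairsIn_card W
      have hle : W.card ≤ W.card * W.card := Nat.le_mul_of_pos_left _ (by omega)
      have h2 := congrArg (Nat.cast (R := ℝ)) h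
      rw [Nat.cast_sub hle] at h2
      push_cast at h2
      exact_mod_cast h2
    have hEdge : 2 * (edgesIn G W : ℝ) ≤ (1+p)/2 * ((W.card:ℝ) * W.card - W.card) := by
      have hH := H W hm0W
      nlinarith [hMcast]
    have hex : ∃ v ∈ W, ((W.filter (G.Adj v)).card : ℝ) ≤ (1+p)/2 * ((W.card:ℝ) - 1) := by
      by_contra hc
      push_neg at hc
      have hne : W.Nonempty := Finset.card_pos.mp (by omega)
      have hsum : ∑ v ∈ W, ((W.filter (G.Adj v)).card:ℝ) = 2 * (edgesIn G W : ℝ) := by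
        have h := handshake G W
        exact_mod_cast congrArg (Nat.cast (R := ℝ)) h
      have hlt : (W.card:ℝ) * ((1+p)/2 * ((W.card:ℝ)-1))
          < ∑ v ∈ W, ((W.filter (G.Adj v)).card:ℝ) := by
        have h := Finset.sum_lt_sum_of_nonempty hne (fun v hv => hc v hv)
        simpa [Finset.sum_const, nsmul_eq_mul] using h
      rw [hsum] at hlt
      nlinarith
    obtain ⟨v, hvW, hdeg⟩ := hex
    set W' := (W.erase v).filter (fun w => ¬ G.Adj v w) with hW'def
    have hWsub : W' ⊆ W.erase v := Finset.filter_subset _ _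
    have hcard' : ((W.erase v).card : ℝ) - ((W.filter (G.Adj v)).card : ℝ) ≤ (W'.card:ℝ) := by
      have h1 : ((W.erase v).filter (G.Adj v)).card + W'.card = (W.erase v).card :=
        Finset.card_filter_add_card_filter_not _
      have h2 : ((W.erase v).filter (G.Adj v)).card ≤ (W.filter (G.Adj v)).card :=
        Finset.card_le_card (Finset.filter_subset_filter _ (Finset.erase_subset _ _))
      have h1' : (((W.erase v).filter (G.Adj v)).card : ℝ) + W'.card = ((W.erase v).card:ℝ) := by
        exact_mod_cast congrArg (Nat.cast (R := ℝ)) h1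
      have h2' : (((W.erase v).filter (G.Adj v)).card : ℝ) ≤ ((W.filter (G.Adj v)).card:ℝ) := by
        exact_mod_cast h2
      linarith
    have herase : ((W.erase v).card:ℝ) = (W.card:ℝ) - 1 := by
      rw [Finset.card_erase_of_mem hvW]
      rw [Nat.cast_sub hWpos]
      norm_num
    have hstep : (2/(1-p))^k * ((m0:ℝ)+2) - 2 ≤ (W'.card:ℝ) := by
      have hWlb : ((1-p)/2) * ((W.card:ℝ) - 1) ≤ (W'.card:ℝ) := by
        rw [herase] at hcard'
        nlinarith
      have hprod : ((1-p)/2) * ((2/(1-p))^(k+1) * ((m0:ℝ)+2) - 3)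
          = (2/(1-p))^k * ((m0:ℝ)+2) - 3*(1-p)/2 := by
        rw [pow_succ]
        field_simp
      have hmono : ((1-p)/2) * ((2/(1-p))^(k+1) * ((m0:ℝ)+2) - 3)
          ≤ ((1-p)/2) * ((W.card:ℝ)-1) := by
        apply mul_le_mul_of_nonneg_left (by linarith) (by linarith)
      rw [hprod] at hmono
      nlinarith
    obtain ⟨S', hS'sub, hS'card, hS'ind⟩ := ih W' hstep
    have hvnotS' : v ∉ S' := fun hv =>
      (Finset.mem_erase.mp (hWsub (hS'sub hv))).1 rfl
    refine ⟨insert v S', ?_, ?_, ?_⟩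
    · intro a ha
      rcases Finset.mem_insert.mp ha with rfl | h
      · exact hvW
      · exact Finset.mem_of_mem_erase (hWsub (hS'sub h))
    · rw [Finset.card_insert_of_notMem hvnotS', hS'card]
    · intro a ha b hb hab
      have hnadj : ∀ w ∈ S', ¬ G.Adj v w := fun w hw =>
        (Finset.mem_filter.mp (hS'sub hw)).2
      rcases Finset.mem_insert.mp ha with rfl | ha' <;>
        rcases Finset.mem_insert.mp hb with rfl | hb'
      · exact absurd rfl hab
      · exact hnadj b hb'
      · exact fun h => hnadj a ha' (G.adj_symm h)
      · exact hS'ind a ha' b hb' hab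

/-- For fixed `0<p<1` and `G ∈ G(n,p)`, with probability tending to `1`,
every `W` with `|W| > n^{1/3}` contains an independent set (a clique of the complement) of
size at least `c·log n`, where `c = -1/(12·log((1-p)/2))`. -/
theorem stmt13 (p : ℝ) (hp0 : 0 < p) (hp1 : p < 1) :
    Tendsto (fun n : ℕ =>
        gnp n p {ω | ∀ W : Finset (Fin n), (n : ℝ) ^ ((1 : ℝ) / 3) < W.card →
          ∃ S : Finset (Fin n), S ⊆ W ∧ (graphOf ω)ᶜ.IsClique (S : Set (Fin n)) ∧
            (-1 / (12 * Real.log ((1 - p) / 2))) * Real.log n ≤ S.card})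
      atTop (nhds 1) := by
  have hq0 : (0:ℝ) < 1 - p := by linarith
  set β := Real.log ((p+(1-p)/4)/p) with hβdef
  have hβ0 : (0:ℝ) < β := by
    apply Real.log_pos
    rw [lt_div_iff₀ hp0]; linarith
  set K : ℝ := 48/((1-p)*β) with hKdef
  have hK0 : 0 < K := by positivity
  set L : ℝ := Real.log (2/(1-p)) with hLdef
  have hL0 : (0:ℝ) < L := by
    apply Real.log_pos
    rw [lt_div_iff₀ hq0]; linarith
  set c : ℝ := -1/(12 * Real.log ((1-p)/2)) with hcdef
  have hlog_eq : Real.log ((1-p)/2) = -L := by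
    rw [hLdef, ← Real.log_inv, inv_div]
  have hcL : c = 1/(12*L) := by
    rw [hcdef, hlog_eq]
    field_simp
  have hc0 : 0 < c := by rw [hcL]; positivity
  -- the sets
  set m0 : ℕ → ℕ := fun n => ⌊K * Real.log n⌋₊ + 3 with hm0def
  set BadSet : (n : ℕ) → Set (Sym2 (Fin n) → Bool) := fun n =>
    {ω | ∃ U : Finset (Fin n), m0 n ≤ U.card ∧
      (1+p)/2 * ((pairsIn U).card : ℝ) < (edgesIn (graphOf ω) U : ℝ)} with hBadSetdef
  set Target : (n : ℕ) → Set (Sym2 (Fin n) → Bool) := fun n =>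
    {ω | ∀ W : Finset (Fin n), (n : ℝ) ^ ((1 : ℝ) / 3) < W.card →
      ∃ S : Finset (Fin n), S ⊆ W ∧ (graphOf ω)ᶜ.IsClique (S : Set (Fin n)) ∧
        c * Real.log n ≤ S.card} with hTargetdef
  -- eventual inclusion (BadSet n)ᶜ ⊆ Target n
  have hincl : ∀ᶠ n : ℕ in atTop, (BadSet n)ᶜ ⊆ Target n := by
    have hsize : ∀ᶠ n : ℕ in atTop,
        (2/(1-p))^(⌈c * Real.log n⌉₊) * ((m0 n : ℝ)+2) - 2 ≤ (n:ℝ)^((1:ℝ)/3) ∧ 1 ≤ n := by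
      -- reduce to a real asymptotic statement
      have hql : ∀ᶠ x : ℝ in atTop,
          Real.exp L * (K * Real.log x + 6) ≤ x ^ ((1:ℝ)/4) := by
        have h1 : Tendsto (fun x : ℝ => Real.log x / x^((1:ℝ)/4)) atTop (nhds 0) :=
          (isLittleO_log_rpow_atTop (by norm_num)).tendsto_div_nhds_zero
        have h2 : Tendsto (fun x : ℝ => x^(-((1:ℝ)/4))) atTop (nhds 0) :=
          tendsto_rpow_neg_atTop (by norm_num)
        have h1' : ∀ᶠ x : ℝ in atTop, Real.log x / x^((1:ℝ)/4) < 1/(2 * Real.exp L * K) := by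
          apply h1.eventually (gt_mem_nhds (by positivity))
        have h2' : ∀ᶠ x : ℝ in atTop, x^(-((1:ℝ)/4)) < 1/(2 * Real.exp L * 6) := by
          apply h2.eventually (gt_mem_nhds (by positivity))
        filter_upwards [h1', h2', eventually_ge_atTop (1:ℝ)] with x hx1 hx2 hx3
        have hx0 : (0:ℝ) < x := by linarith
        have hxp : (0:ℝ) < x^((1:ℝ)/4) := Real.rpow_pos_of_pos hx0 _
        have hlx : 0 ≤ Real.log x := Real.log_nonneg hx3
        have ha : Real.exp L * (K * Real.log x) ≤ x^((1:ℝ)/4) / 2 := by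
          have hpos : (0:ℝ) < 2 * Real.exp L * K := by positivity
          have hx1' : Real.log x * (2 * Real.exp L * K) < 1 * x^((1:ℝ)/4) :=
            (div_lt_div_iff₀ hxp hpos).mp hx1
          nlinarith [Real.exp_pos L]
        have hb : Real.exp L * 6 ≤ x^((1:ℝ)/4) / 2 := by
          rw [Real.rpow_neg hx0.le] at hx2
          have hpos : (0:ℝ) < 2 * Real.exp L * 6 := by positivity
          have hx2' : (x^((1:ℝ)/4))⁻¹ * (2 * Real.exp L * 6) < 1 :=
            (lt_div_iff₀ hpos).mp hx2
          have hinv : x^((1:ℝ)/4) * (x^((1:ℝ)/4))⁻¹ = 1 := mul_inv_cancel₀ hxp.ne'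
          nlinarith [Real.exp_pos L, mul_pos hxp (mul_pos (mul_pos two_pos (Real.exp_pos L)) (by norm_num : (0:ℝ) < 6))]
        calc Real.exp L * (K * Real.log x + 6)
            = Real.exp L * (K * Real.log x) + Real.exp L * 6 := by ring
        _ ≤ x^((1:ℝ)/4)/2 + x^((1:ℝ)/4)/2 := add_le_add ha hb
        _ = x^((1:ℝ)/4) := by ring
      have hqn : ∀ᶠ n : ℕ in atTop, Real.exp L * (K * Real.log n + 6) ≤ (n:ℝ)^((1:ℝ)/4) :=
        tendsto_natCast_atTop_atTop.eventually hql
      filter_upwards [hqn, eventually_ge_atTop 1] with n hn hn1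
      refine ⟨?_, hn1⟩
      have hn0 : (0:ℝ) < n := by exact_mod_cast hn1
      have hlogn0 : 0 ≤ Real.log n := Real.log_nonneg (by exact_mod_cast hn1)
      set k := ⌈c * Real.log n⌉₊ with hkdef
      have hk_ub : (k:ℝ) ≤ c * Real.log n + 1 :=
        le_of_lt (Nat.ceil_lt_add_one (by positivity))
      have h2q : 2/(1-p) = Real.exp L := by
        rw [hLdef, Real.exp_log (by positivity)]
      have hpowk : (2/(1-p))^k = Real.exp ((k:ℝ) * L) := by
        rw [h2q, ← Real.exp_nat_mul]
      have hexp_le : Real.exp ((k:ℝ)*L) ≤ Real.exp (c * Real.log n * L) * Real.exp L := by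
        rw [← Real.exp_add]
        apply Real.exp_le_exp.mpr
        nlinarith
      have hcLn : Real.exp (c * Real.log n * L) = (n:ℝ)^((1:ℝ)/12) := by
        rw [Real.rpow_def_of_pos hn0]
        congr 1
        rw [hcL]
        field_simp
      have hm0_ub : ((m0 n : ℕ):ℝ) + 2 ≤ K * Real.log n + 6 := by
        have : ((m0 n : ℕ):ℝ) = (⌊K * Real.log n⌋₊ : ℝ) + 3 := by
          rw [hm0def]; push_cast; ring
        rw [this]
        have := Nat.floor_le (by positivity : (0:ℝ) ≤ K * Real.log n)
        linarith
      have hm0pos : (0:ℝ) ≤ ((m0 n:ℕ):ℝ) + 2 := by positivity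
      calc (2/(1-p))^k * ((m0 n : ℝ)+2) - 2
          ≤ (2/(1-p))^k * ((m0 n : ℝ)+2) := by linarith
      _ = Real.exp ((k:ℝ)*L) * ((m0 n : ℝ)+2) := by rw [hpowk]
      _ ≤ (Real.exp (c * Real.log n * L) * Real.exp L) * (K * Real.log n + 6) := by
          apply mul_le_mul hexp_le hm0_ub hm0pos (by positivity)
      _ = (n:ℝ)^((1:ℝ)/12) * (Real.exp L * (K * Real.log n + 6)) := by
          rw [hcLn]; ring
      _ ≤ (n:ℝ)^((1:ℝ)/12) * (n:ℝ)^((1:ℝ)/4) := by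
          apply mul_le_mul_of_nonneg_left hn (by positivity)
      _ = (n:ℝ)^((1:ℝ)/3) := by
          rw [← Real.rpow_add hn0]
          norm_num
    filter_upwards [hsize] with n hn
    obtain ⟨hsz, hn1⟩ := hn
    intro ω hω
    rw [hTargetdef]
    intro W hW
    have hgood : ∀ U : Finset (Fin n), m0 n ≤ U.card →
        (edgesIn (graphOf ω) U : ℝ) ≤ (1+p)/2 * ((pairsIn U).card : ℝ) := by
      intro U hU
      by_contra hlt
      push_neg at hlt
      exact hω ⟨U, hU, hlt⟩
    have hm01 : 1 ≤ m0 n := by show 1 ≤ ⌊K * Real.log (n:ℝ)⌋₊ + 3; omega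
    have hWlb : (2/(1-p))^(⌈c * Real.log n⌉₊) * ((m0 n : ℝ)+2) - 2 ≤ (W.card:ℝ) :=
      le_trans hsz (le_of_lt hW)
    obtain ⟨S, hSsub, hScard, hSind⟩ :=
      greedy p hp0 hp1 (graphOf ω) (m0 n) hm01 hgood (⌈c * Real.log n⌉₊) W hWlb
    refine ⟨S, hSsub, ?_, ?_⟩
    · intro a ha b hb hab
      rw [SimpleGraph.compl_adj]
      exact ⟨hab, hSind a ha b hb hab⟩
    · rw [hScard]
      exact Nat.le_ceil _
  -- eventual measure bound
  have hmeas : ∀ᶠ n : ℕ in atTop, gnp n p (BadSet n) ≤ ENNReal.ofReal (2/n) := by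
    have hβev : ∀ᶠ n : ℕ in atTop, β ≤ 3 * Real.log n := by
      have := (Real.tendsto_log_atTop.comp tendsto_natCast_atTop_atTop).eventually_ge_atTop (β/3)
      filter_upwards [this] with n hn
      have : β/3 ≤ Real.log n := hn
      linarith
    filter_upwards [hβev, eventually_ge_atTop 3] with n hβn hn3
    exact union_bound n p hp0 hp1 hn3 hβn
  -- squeeze
  show Tendsto (fun n : ℕ => gnp n p (Target n)) atTop (nhds 1)
  have hub : ∀ᶠ n : ℕ in atTop, gnp n p (Target n) ≤ 1 :=
    Eventually.of_forall (fun n => prob_le_one)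
  have hlb : ∀ᶠ n : ℕ in atTop, 1 - ENNReal.ofReal (2/(n:ℝ)) ≤ gnp n p (Target n) := by
    filter_upwards [hincl, hmeas] with n h1 h2
    have hcompl : gnp n p ((BadSet n)ᶜ) = 1 - gnp n p (BadSet n) := by
      rw [prob_compl_eq_one_sub (meas_all _)]
    calc 1 - ENNReal.ofReal (2/(n:ℝ)) ≤ 1 - gnp n p (BadSet n) :=
          tsub_le_tsub_left h2 1
    _ = gnp n p ((BadSet n)ᶜ) := hcompl.symm
    _ ≤ gnp n p (Target n) := measure_mono h1
  have hlim : Tendsto (fun n : ℕ => 1 - ENNReal.ofReal (2/(n:ℝ))) atTop (nhds 1) := by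
    have h0 : Tendsto (fun n : ℕ => ENNReal.ofReal (2/(n:ℝ))) atTop (nhds 0) := by
      have := tendsto_const_div_atTop_nhds_zero_nat (2:ℝ)
      have h := ENNReal.tendsto_ofReal this
      simpa using h
    have := ENNReal.Tendsto.sub (tendsto_const_nhds (x := (1:ℝ≥0∞))) h0
      (Or.inl ENNReal.one_ne_top)
    simpa using this
  exact tendsto_of_tendsto_of_tendsto_of_le_of_le' hlim tendsto_const_nhds hlb hub
end
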